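/- Let Δ : A → A be a weak-2-local derivation on a C*-algebra A, let p be a projection in A, and let b ∈ A satisfy pb = bp = 0. Then pΔ(a + b)p = pΔ(a)p for every a ∈ A. In particular, pΔ(a)p = pΔ(a - (1-p)a(1-p))p for every a ∈ A. -/
import Mathlib


variable {A : Type*} [NonUnitalNormedRing A] [StarRing A] [CStarRing A] [NormedSpace ℂ A]
  [IsScalarTower ℂ A A] [SMulCommClass ℂ A A] [StarModule ℂ A] [CompleteSpace A]

/-- A (bounded linear) derivation on `A`. -/
def IsDerivationCLM (D : A →L[ℂ] A) : Prop := ∀ x y, D (x * y) = D x * y + x * D y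

/-- A (non-necessarily linear) weak-2-local derivation on the C*-algebra `A`. -/
def IsWeak2LocalDerivation (Δ : A → A) : Prop :=
  ∀ a b : A, ∀ φ : A →L[ℂ] ℂ, ∃ D : A →L[ℂ] A,
    IsDerivationCLM D ∧ φ (Δ a) = φ (D a) ∧ φ (Δ b) = φ (D b)

lemma pDbp_zero (D : A →L[ℂ] A) (hD : IsDerivationCLM D) (p b : A)
    (hpb : p * b = 0) (hbp : b * p = 0) : p * D b * p = 0 := by
  have h1 : D (p * b) = D p * b + p * D b := hD p b
  rw [hpb, map_zero] at h1
  have h2 : p * D b = -(D p * b) := by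
    rw [eq_neg_iff_add_eq_zero, add_comm]; exact h1.symm
  calc p * D b * p = -(D p * (b * p)) := by rw [h2]; rw [neg_mul, mul_assoc]
    _ = 0 := by rw [hbp, mul_zero, neg_zero]

/-- For a weak-2-local derivation `Δ` on a C*-algebra `A`, a projection `p` and `b ∈ A` with
`pb = bp = 0`, one has `p Δ(a+b) p = p Δ(a) p` for all `a`; in particular
`p Δ(a) p = p Δ(a - (1-p)a(1-p)) p`, the latter expressed without a unit as
`p Δ(a) p = p Δ(a - (a - pa - ap + pap)) p`. -/
theorem proj_weak2local_proj (Δ : A → A) (hΔ : IsWeak2LocalDerivation Δ)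
    (p : A) (hp : IsIdempotentElem p) (hps : star p = p) :
    (∀ a b : A, p * b = 0 → b * p = 0 → p * Δ (a + b) * p = p * Δ a * p) ∧
    (∀ a : A, p * Δ a * p = p * Δ (a - (a - p * a - a * p + p * a * p)) * p) := by
  have key : ∀ a b : A, p * b = 0 → b * p = 0 → p * Δ (a + b) * p = p * Δ a * p := by
    intro a b hpb hbp
    have hsub : p * (Δ (a + b) - Δ a) * p = 0 := by
      apply NormedSpace.eq_zero_of_forall_dual_eq_zero ℂ
      intro φ
      set L : A →L[ℂ] A := ContinuousLinearMap.mul ℂ A p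
      set R : A →L[ℂ] A := (ContinuousLinearMap.mul ℂ A).flip p
      set ψ : A →L[ℂ] ℂ := φ.comp (L.comp R) with hψ
      have hψ' : ∀ x : A, ψ x = φ (p * x * p) := by
        intro x
        simp only [hψ, ContinuousLinearMap.comp_apply]
        rw [mul_assoc]
        rfl
      obtain ⟨D, hD, h1, h2⟩ := hΔ (a + b) a ψ
      have hDb : ψ (D b) = 0 := by
        rw [hψ', pDbp_zero D hD p b hpb hbp, map_zero]
      have : φ (p * (Δ (a + b) - Δ a) * p) = ψ (Δ (a + b)) - ψ (Δ a) := by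
        rw [← map_sub ψ, hψ', mul_sub, sub_mul]
      rw [this, h1, h2, ← map_sub]
      have hDab : D (a + b) - D a = D b := by rw [map_add]; abel
      rw [hDab, hDb]
    rw [mul_sub, sub_mul] at hsub
    exact sub_eq_zero.mp hsub
  refine ⟨key, fun a => ?_⟩
  set b := a - p * a - a * p + p * a * p with hb
  have hpb : p * b = 0 := by
    simp only [hb, mul_add, mul_sub, ← mul_assoc, hp.eq]
    abel
  have hbp : b * p = 0 := by
    simp only [hb, add_mul, sub_mul, mul_assoc, hp.eq]
    abel
  have := key (a - b) b hpb hbp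
  rw [sub_add_cancel] at this
  exact this
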